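/- Let m1, m2, m3, m4, m5, n1, n2, n3, n4, n5 be real numbers and define p1 = m1² − 2m2 − n1², p2 = m2² + 2m4 − 2m1·m3 − n2² + 2n1·n3, p3 = m3² + 2m1·m5 − 2m2·m4 − 2n1·n5 + 2n2·n4 − n3², p4 = m4² − 2m3·m5 + 2n3·n5 − n4², p5 = m5² − n5². For τ2 ≥ 0 and ξ ∈ ℂ define ψ(ξ, τ2) = ξ⁵ + m1·ξ⁴ + m2·ξ³ + m3·ξ² + m4·ξ + m5 + e^{−ξτ2}·(n1·ξ⁴ + n2·ξ³ + n3·ξ² + n4·ξ + n5). Assume: (i) every ξ ∈ ℂ with ψ(ξ, 0) = 0 satisfies Re ξ < 0; (ii) no ω > 0 satisfies ω^10 + p1·ω^8 + p2·ω^6 + p3·ω^4 + p4·ω² + p5 = 0; and (iii) m5 + n5 ≠ 0. Then for every τ2 ≥ 0, every ξ ∈ ℂ with ψ(ξ, τ2) = 0 satisfies Re ξ < 0. -/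

import Mathlib

lemma abs5 (x1 x2 x3 x4 x5 : ℂ) : ‖(x1+x2+x3+x4+x5)‖ ≤
    ‖x1‖ + ‖x2‖ + ‖x3‖ + ‖x4‖ + ‖x5‖ := by
  have h1 := norm_add_le (x1+x2) x3
  have h2 := norm_add_le x1 x2
  have h3 := norm_add_le (x1+x2+x3) x4
  have h4 := norm_add_le (x1+x2+x3+x4) x5
  linarith

open Complex in
lemma rootbound (m1 m2 m3 m4 m5 n1 n2 n3 n4 n5 : ℝ) (τ : ℝ) (hτ : 0 ≤ τ) (ξ : ℂ) (hre : 0 ≤ ξ.re)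
    (h : ξ ^ 5 + (m1 : ℂ) * ξ ^ 4 + (m2 : ℂ) * ξ ^ 3 + (m3 : ℂ) * ξ ^ 2 +
          (m4 : ℂ) * ξ + (m5 : ℂ) +
          Complex.exp (-ξ * (τ : ℂ)) *
            ((n1 : ℂ) * ξ ^ 4 + (n2 : ℂ) * ξ ^ 3 + (n3 : ℂ) * ξ ^ 2 + (n4 : ℂ) * ξ + (n5 : ℂ)) = 0) :
    ‖ξ‖ ≤ |m1|+|m2|+|m3|+|m4|+|m5|+|n1|+|n2|+|n3|+|n4|+|n5|+1 := by
  set C : ℝ := |m1|+|m2|+|m3|+|m4|+|m5|+|n1|+|n2|+|n3|+|n4|+|n5|+1 with hC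
  set a : ℝ := ‖ξ‖ with ha
  have ha0 : 0 ≤ a := norm_nonneg ξ
  have hC1 : 1 ≤ C := by have := abs_nonneg m1; have := abs_nonneg m2; have := abs_nonneg m3; have := abs_nonneg m4; have := abs_nonneg m5; have := abs_nonneg n1; have := abs_nonneg n2; have := abs_nonneg n3; have := abs_nonneg n4; have := abs_nonneg n5; simp only [hC]; linarith
  rcases le_or_gt a C with h' | h'
  · exact h'
  exfalso
  have ha1 : 1 < a := lt_of_le_of_lt hC1 h'
  have hexp : ‖(Complex.exp (-ξ * (τ:ℂ)))‖ ≤ 1 := by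
    rw [Complex.norm_exp]
    have : (-ξ * (τ:ℂ)).re = -ξ.re * τ := by simp
    rw [this]
    exact Real.exp_le_one_iff.mpr (by nlinarith)
  have heq : ξ^5 = -((m1 : ℂ) * ξ ^ 4 + (m2 : ℂ) * ξ ^ 3 + (m3 : ℂ) * ξ ^ 2 +
          (m4 : ℂ) * ξ + (m5 : ℂ) +
          Complex.exp (-ξ * (τ : ℂ)) *
            ((n1 : ℂ) * ξ ^ 4 + (n2 : ℂ) * ξ ^ 3 + (n3 : ℂ) * ξ ^ 2 + (n4 : ℂ) * ξ + (n5 : ℂ))) := by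
    linear_combination h
  have hQ : ‖((n1 : ℂ) * ξ ^ 4 + (n2 : ℂ) * ξ ^ 3 + (n3 : ℂ) * ξ ^ 2 + (n4 : ℂ) * ξ + (n5 : ℂ))‖
      ≤ |n1| * a^4 + |n2| * a^3 + |n3| * a^2 + |n4| * a + |n5| := by
    refine (abs5 _ _ _ _ _).trans (le_of_eq ?_)
    simp [norm_mul, norm_pow, Complex.norm_real, Real.norm_eq_abs, ha]
  have hP : ‖((m1 : ℂ) * ξ ^ 4 + (m2 : ℂ) * ξ ^ 3 + (m3 : ℂ) * ξ ^ 2 + (m4 : ℂ) * ξ + (m5 : ℂ))‖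
      ≤ |m1| * a^4 + |m2| * a^3 + |m3| * a^2 + |m4| * a + |m5| := by
    refine (abs5 _ _ _ _ _).trans (le_of_eq ?_)
    simp [norm_mul, norm_pow, Complex.norm_real, Real.norm_eq_abs, ha]
  have hQ0 : (0:ℝ) ≤ ‖((n1 : ℂ) * ξ ^ 4 + (n2 : ℂ) * ξ ^ 3 + (n3 : ℂ) * ξ ^ 2 + (n4 : ℂ) * ξ + (n5 : ℂ))‖ := norm_nonneg _
  have hmain : a^5 ≤ |m1| * a^4 + |m2| * a^3 + |m3| * a^2 + |m4| * a + |m5| + (|n1| * a^4 + |n2| * a^3 + |n3| * a^2 + |n4| * a + |n5|) := by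
    have h5 : a^5 = ‖(ξ^5)‖ := by rw [norm_pow]
    rw [h5, heq, norm_neg]
    calc ‖_‖ ≤ ‖((m1 : ℂ) * ξ ^ 4 + (m2 : ℂ) * ξ ^ 3 + (m3 : ℂ) * ξ ^ 2 + (m4 : ℂ) * ξ + (m5 : ℂ))‖
          + ‖(Complex.exp (-ξ * (τ : ℂ)) * ((n1 : ℂ) * ξ ^ 4 + (n2 : ℂ) * ξ ^ 3 + (n3 : ℂ) * ξ ^ 2 + (n4 : ℂ) * ξ + (n5 : ℂ)))‖ := norm_add_le _ _
      _ ≤ (|m1| * a^4 + |m2| * a^3 + |m3| * a^2 + |m4| * a + |m5|) + 1 * (|n1| * a^4 + |n2| * a^3 + |n3| * a^2 + |n4| * a + |n5|) := by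
          rw [norm_mul]
          exact add_le_add hP (mul_le_mul hexp hQ hQ0 zero_le_one)
      _ = _ := by ring
  have p1 : a ≤ a^4 := by
    calc a = a^1 := (pow_one a).symm
      _ ≤ a^4 := pow_le_pow_right₀ ha1.le (by norm_num)
  have p2 : a^2 ≤ a^4 := pow_le_pow_right₀ ha1.le (by norm_num)
  have p3 : a^3 ≤ a^4 := pow_le_pow_right₀ ha1.le (by norm_num)
  have p4 : (1:ℝ) ≤ a^4 := by linarith
  have h4pos : 0 < a^4 := by positivity
  have l2 := mul_le_mul_of_nonneg_left p3 (abs_nonneg m2)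
  have l3 := mul_le_mul_of_nonneg_left p2 (abs_nonneg m3)
  have l4 := mul_le_mul_of_nonneg_left p1 (abs_nonneg m4)
  have l5 := mul_le_mul_of_nonneg_left p4 (abs_nonneg m5)
  have k2 := mul_le_mul_of_nonneg_left p3 (abs_nonneg n2)
  have k3 := mul_le_mul_of_nonneg_left p2 (abs_nonneg n3)
  have k4 := mul_le_mul_of_nonneg_left p1 (abs_nonneg n4)
  have k5 := mul_le_mul_of_nonneg_left p4 (abs_nonneg n5)
  have hCa : C * a^4 < a * a^4 := mul_lt_mul_of_pos_right h' h4pos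
  have h5 : a^5 = a * a^4 := by ring
  rw [hC] at hCa
  nlinarith [hmain, hCa, h5, l2, l3, l4, l5, k2, k3, k4, k5]

open Complex in
lemma noimag (m1 m2 m3 m4 m5 n1 n2 n3 n4 n5 : ℝ)
    (hnoroot : ¬ ∃ ω : ℝ, 0 < ω ∧
        ω ^ 10 + (m1 ^ 2 - 2 * m2 - n1 ^ 2) * ω ^ 8 + (m2 ^ 2 + 2 * m4 - 2 * m1 * m3 - n2 ^ 2 + 2 * n1 * n3) * ω ^ 6 + (m3 ^ 2 + 2 * m1 * m5 - 2 * m2 * m4 - 2 * n1 * n5 + 2 * n2 * n4 - n3 ^ 2) * ω ^ 4 + (m4 ^ 2 - 2 * m3 * m5 + 2 * n3 * n5 - n4 ^ 2) * ω ^ 2 + (m5 ^ 2 - n5 ^ 2) = 0)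
    (hconst : m5 + n5 ≠ 0) (τ : ℝ) (ω : ℝ)
    (h : (↑ω * I) ^ 5 + (m1 : ℂ) * (↑ω * I) ^ 4 + (m2 : ℂ) * (↑ω * I) ^ 3 + (m3 : ℂ) * (↑ω * I) ^ 2 +
          (m4 : ℂ) * (↑ω * I) + (m5 : ℂ) +
          Complex.exp (-(↑ω * I) * (τ : ℂ)) *
            ((n1 : ℂ) * (↑ω * I) ^ 4 + (n2 : ℂ) * (↑ω * I) ^ 3 + (n3 : ℂ) * (↑ω * I) ^ 2 + (n4 : ℂ) * (↑ω * I) + (n5 : ℂ)) = 0) : False := by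
  rcases eq_or_ne ω 0 with h0 | h0
  · subst h0
    simp at h
    exact hconst (by exact_mod_cast h)
  · have hI2 : (I:ℂ)^2 = -1 := Complex.I_sq
    have hI3 : (I:ℂ)^3 = -I := by rw [pow_succ, hI2]; ring
    have hI4 : (I:ℂ)^4 = 1 := by rw [pow_succ, hI3]; simp [Complex.I_mul_I]
    have hI5 : (I:ℂ)^5 = I := by rw [pow_succ, hI4]; ring
    set P : ℂ := (↑ω * I) ^ 5 + (m1 : ℂ) * (↑ω * I) ^ 4 + (m2 : ℂ) * (↑ω * I) ^ 3 + (m3 : ℂ) * (↑ω * I) ^ 2 + (m4 : ℂ) * (↑ω * I) + (m5 : ℂ) with hPdef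
    set Q : ℂ := (n1 : ℂ) * (↑ω * I) ^ 4 + (n2 : ℂ) * (↑ω * I) ^ 3 + (n3 : ℂ) * (↑ω * I) ^ 2 + (n4 : ℂ) * (↑ω * I) + (n5 : ℂ) with hQdef
    have hP : P = ((m1*ω^4 - m3*ω^2 + m5 : ℝ) : ℂ) + ((ω^5 - m2*ω^3 + m4*ω : ℝ) : ℂ) * I := by
      rw [hPdef]; simp only [mul_pow, hI2, hI3, hI4, hI5]
      push_cast; ring
    have hQ : Q = ((n1*ω^4 - n3*ω^2 + n5 : ℝ) : ℂ) + ((- n2*ω^3 + n4*ω : ℝ) : ℂ) * I := by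
      rw [hQdef]; simp only [mul_pow, hI2, hI3, hI4, hI5]
      push_cast; ring
    have heq : P = -(Complex.exp (-(↑ω * I) * (τ : ℂ)) * Q) := by linear_combination h
    have habs : ‖P‖ = ‖Q‖ := by
      rw [heq, norm_neg, norm_mul, Complex.norm_exp]
      have : (-(↑ω * I) * (τ : ℂ)).re = 0 := by simp
      rw [this, Real.exp_zero, one_mul]
    have hns : Complex.normSq P = Complex.normSq Q := by
      rw [← Complex.sq_norm, ← Complex.sq_norm, habs]
    rw [hP, hQ, Complex.normSq_add_mul_I, Complex.normSq_add_mul_I] at hns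
    apply hnoroot
    refine ⟨|ω|, abs_pos.mpr h0, ?_⟩
    have h2 : |ω|^2 = ω^2 := sq_abs ω
    have h10 : |ω|^10 = ω^10 := by rw [show 10 = 2*5 from rfl, pow_mul, pow_mul, h2]
    have h8 : |ω|^8 = ω^8 := by rw [show 8 = 2*4 from rfl, pow_mul, pow_mul, h2]
    have h6 : |ω|^6 = ω^6 := by rw [show 6 = 2*3 from rfl, pow_mul, pow_mul, h2]
    have h4 : |ω|^4 = ω^4 := by rw [show 4 = 2*2 from rfl, pow_mul, pow_mul, h2]
    rw [h10, h8, h6, h4, h2]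
    linear_combination hns

set_option maxHeartbeats 1000000 in
theorem stmt14 (m1 m2 m3 m4 m5 n1 n2 n3 n4 n5 : ℝ)
    (p1 p2 p3 p4 p5 : ℝ)
    (hp1 : p1 = m1 ^ 2 - 2 * m2 - n1 ^ 2)
    (hp2 : p2 = m2 ^ 2 + 2 * m4 - 2 * m1 * m3 - n2 ^ 2 + 2 * n1 * n3)
    (hp3 : p3 = m3 ^ 2 + 2 * m1 * m5 - 2 * m2 * m4 - 2 * n1 * n5 + 2 * n2 * n4 - n3 ^ 2)
    (hp4 : p4 = m4 ^ 2 - 2 * m3 * m5 + 2 * n3 * n5 - n4 ^ 2)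
    (hp5 : p5 = m5 ^ 2 - n5 ^ 2)
    (ψ : ℂ → ℝ → ℂ)
    (hψ : ∀ (ξ : ℂ) (τ2 : ℝ), ψ ξ τ2 =
        ξ ^ 5 + (m1 : ℂ) * ξ ^ 4 + (m2 : ℂ) * ξ ^ 3 + (m3 : ℂ) * ξ ^ 2 +
          (m4 : ℂ) * ξ + (m5 : ℂ) +
          Complex.exp (-ξ * (τ2 : ℂ)) *
            ((n1 : ℂ) * ξ ^ 4 + (n2 : ℂ) * ξ ^ 3 + (n3 : ℂ) * ξ ^ 2 + (n4 : ℂ) * ξ + (n5 : ℂ)))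
    (hstable0 : ∀ ξ : ℂ, ψ ξ 0 = 0 → ξ.re < 0)
    (hnoroot : ¬ ∃ ω : ℝ, 0 < ω ∧
        ω ^ 10 + p1 * ω ^ 8 + p2 * ω ^ 6 + p3 * ω ^ 4 + p4 * ω ^ 2 + p5 = 0)
    (hconst : m5 + n5 ≠ 0) :
    ∀ τ2 : ℝ, 0 ≤ τ2 → ∀ ξ : ℂ, ψ ξ τ2 = 0 → ξ.re < 0 := by
  subst hp1 hp2 hp3 hp4 hp5
  by_contra hcon
  push_neg at hcon
  obtain ⟨τ0, hτ0, ξ0, hroot0, hre0⟩ := hcon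
  -- the set of bad delays
  set A : Set ℝ := {τ | 0 ≤ τ ∧ ∃ ξ : ℂ, 0 ≤ ξ.re ∧ ψ ξ τ = 0} with hAdef
  have hAne : A.Nonempty := ⟨τ0, hτ0, ξ0, hre0, hroot0⟩
  have hAbdd : BddBelow A := ⟨0, fun τ hτ => hτ.1⟩
  obtain ⟨Cb, hCb⟩ : ∃ Cb : ℝ, Cb = |m1|+|m2|+|m3|+|m4|+|m5|+|n1|+|n2|+|n3|+|n4|+|n5|+1 := ⟨_, rfl⟩
  -- joint continuity
  have hFcont : Continuous (fun p : ℂ × ℝ =>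
      p.1 ^ 5 + (m1 : ℂ) * p.1 ^ 4 + (m2 : ℂ) * p.1 ^ 3 + (m3 : ℂ) * p.1 ^ 2 +
        (m4 : ℂ) * p.1 + (m5 : ℂ) +
        Complex.exp (-p.1 * ((p.2 : ℝ) : ℂ)) *
          ((n1 : ℂ) * p.1 ^ 4 + (n2 : ℂ) * p.1 ^ 3 + (n3 : ℂ) * p.1 ^ 2 + (n4 : ℂ) * p.1 + (n5 : ℂ))) := by
    fun_prop
  have hψfun : ∀ τ : ℝ, (fun ξ => ψ ξ τ) = (fun ξ : ℂ =>
      ξ ^ 5 + (m1 : ℂ) * ξ ^ 4 + (m2 : ℂ) * ξ ^ 3 + (m3 : ℂ) * ξ ^ 2 +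
        (m4 : ℂ) * ξ + (m5 : ℂ) +
        Complex.exp (-ξ * (τ : ℂ)) *
          ((n1 : ℂ) * ξ ^ 4 + (n2 : ℂ) * ξ ^ 3 + (n3 : ℂ) * ξ ^ 2 + (n4 : ℂ) * ξ + (n5 : ℂ))) :=
    fun τ => funext fun ξ => hψ ξ τ
  have hdiff : ∀ τ : ℝ, Differentiable ℂ (fun ξ => ψ ξ τ) := by
    intro τ
    rw [hψfun τ]
    fun_prop
  have hAclosed : IsClosed A := by
    apply IsSeqClosed.isClosed
    intro τs τlim hmem htend
    have hτs : ∀ n, 0 ≤ τs n := fun n => (hmem n).1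
    choose ξs hres hroots using fun n => (hmem n).2
    have hbd : ∀ n, ξs n ∈ Metric.closedBall (0:ℂ) Cb := by
      intro n
      rw [Metric.mem_closedBall, dist_zero_right, hCb]
      have h0 := hroots n
      rw [hψ] at h0
      exact rootbound m1 m2 m3 m4 m5 n1 n2 n3 n4 n5 (τs n) (hτs n) (ξs n) (hres n) h0
    obtain ⟨ξl, hξmem, φ, hφ, hconv⟩ :=
      tendsto_subseq_of_bounded Metric.isBounded_closedBall hbd
    have hτconv : Filter.Tendsto (fun n => τs (φ n)) Filter.atTop (nhds τlim) :=
      htend.comp hφ.tendsto_atTop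
    have hpconv : Filter.Tendsto (fun n => (ξs (φ n), τs (φ n))) Filter.atTop
        (nhds (ξl, τlim)) := hconv.prodMk_nhds hτconv
    have hcomp := (hFcont.tendsto (ξl, τlim)).comp hpconv
    have hvals : (fun n => ψ (ξs (φ n)) (τs (φ n))) = fun _ => (0:ℂ) :=
      funext fun n => hroots (φ n)
    have hF0 : ψ ξl τlim = 0 := by
      rw [hψ]
      have : (fun n => ψ (ξs (φ n)) (τs (φ n))) = ((fun p : ℂ × ℝ =>
          p.1 ^ 5 + (m1 : ℂ) * p.1 ^ 4 + (m2 : ℂ) * p.1 ^ 3 + (m3 : ℂ) * p.1 ^ 2 +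
          (m4 : ℂ) * p.1 + (m5 : ℂ) +
          Complex.exp (-p.1 * ((p.2 : ℝ) : ℂ)) *
            ((n1 : ℂ) * p.1 ^ 4 + (n2 : ℂ) * p.1 ^ 3 + (n3 : ℂ) * p.1 ^ 2 + (n4 : ℂ) * p.1 + (n5 : ℂ))) ∘
            (fun n => (ξs (φ n), τs (φ n)))) :=
        funext fun n => hψ _ _
      rw [← this, hvals] at hcomp
      exact tendsto_nhds_unique hcomp tendsto_const_nhds
    have hrel : 0 ≤ ξl.re := by
      have hreconv : Filter.Tendsto (fun n => (ξs (φ n)).re) Filter.atTop (nhds ξl.re) :=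
        (Complex.continuous_re.tendsto ξl).comp hconv
      exact ge_of_tendsto' hreconv fun n => hres (φ n)
    have hτl : 0 ≤ τlim := ge_of_tendsto' htend hτs
    exact ⟨hτl, ξl, hrel, hF0⟩
  set τst : ℝ := sInf A with hτst
  have hτstA : τst ∈ A := hAclosed.csInf_mem hAne hAbdd
  obtain ⟨hτst0, ξst, hrest, hrootst⟩ := hτstA
  have hrepos : 0 < ξst.re := by
    rcases hrest.lt_or_eq with h | h
    · exact h
    · exfalso
      have hξeq : ξst = (ξst.im : ℂ) * Complex.I := by
        apply Complex.ext <;> simp [← h]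
      have h0 := hrootst
      rw [hξeq] at h0
      rw [hψ] at h0
      exact noimag m1 m2 m3 m4 m5 n1 n2 n3 n4 n5 hnoroot hconst τst ξst.im h0
  have hτpos : 0 < τst := by
    rcases hτst0.lt_or_eq with h | h
    · exact h
    · exfalso
      rw [← h] at hrootst
      exact absurd (hstable0 ξst hrootst) (not_lt.mpr hrest)
  have hbelow : ∀ τ : ℝ, 0 ≤ τ → τ < τst → ∀ ξ : ℂ, 0 ≤ ξ.re → ψ ξ τ ≠ 0 := by
    intro τ h0 hlt ξ hξ hzero
    exact absurd (csInf_le hAbdd ⟨h0, ξ, hξ, hzero⟩) (not_le.mpr hlt)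
  -- ψ 0 τst ≠ 0
  have hfnot0 : ψ 0 τst ≠ 0 := by
    rw [hψ]
    simp only [ne_eq]
    intro hz
    apply hconst
    have : ((m5 + n5 : ℝ) : ℂ) = 0 := by
      push_cast
      simpa using hz
    exact_mod_cast this
  -- isolated zeros
  have hana : AnalyticAt ℂ (fun ξ => ψ ξ τst) ξst := ((hdiff τst).analyticAt ξst)
  rcases hana.eventually_eq_zero_or_eventually_ne_zero with hev | hev
  · have hEq : Set.EqOn (fun ξ => ψ ξ τst) 0 Set.univ :=
      AnalyticOnNhd.eqOn_zero_of_preconnected_of_eventuallyEq_zero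
        (fun z _ => (hdiff τst).analyticAt z) isPreconnected_univ (Set.mem_univ ξst) hev
    exact hfnot0 (hEq (Set.mem_univ 0))
  rw [eventually_nhdsWithin_iff, Metric.eventually_nhds_iff] at hev
  obtain ⟨ε, hε, hev⟩ := hev
  obtain ⟨r, hrdef⟩ : ∃ r : ℝ, r = min (ε/2) (ξst.re/2) := ⟨_, rfl⟩
  have hr : 0 < r := hrdef ▸ lt_min (by linarith) (by linarith)
  have hrε : r ≤ ε/2 := hrdef ▸ min_le_left _ _
  have hrre : r ≤ ξst.re/2 := hrdef ▸ min_le_right _ _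
  have hsphere_ne : ∀ z ∈ Metric.sphere ξst r, ψ z τst ≠ 0 := by
    intro z hz
    rw [Metric.mem_sphere] at hz
    apply hev (by rw [hz]; linarith)
    intro hzz
    rw [Set.mem_singleton_iff] at hzz
    rw [hzz, dist_self] at hz
    exact hr.ne hz
  have hball_re : ∀ z ∈ Metric.closedBall ξst r, ξst.re/2 ≤ z.re := by
    intro z hz
    rw [Metric.mem_closedBall] at hz
    have h1 : |(z - ξst).re| ≤ ‖(z - ξst)‖ := Complex.abs_re_le_norm _
    rw [Complex.sub_re] at h1
    rw [Complex.dist_eq] at hz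
    have h2 := abs_le.mp (h1.trans hz)
    linarith [h2.1]
  -- minimum of |ψ · τst| on the sphere
  have hcontst : Continuous fun z : ℂ => ‖(ψ z τst)‖ := by
    have : Continuous fun z : ℂ => ψ z τst := by rw [hψfun τst]; fun_prop
    exact continuous_norm.comp this
  obtain ⟨z0, hz0mem, hz0min⟩ := (isCompact_sphere ξst r).exists_isMinOn
    (NormedSpace.sphere_nonempty.mpr hr.le) hcontst.continuousOn
  obtain ⟨m, hmdef⟩ : ∃ m : ℝ, m = ‖(ψ z0 τst)‖ := ⟨_, rfl⟩
  have hm : 0 < m := hmdef ▸ norm_pos_iff.mpr (hsphere_ne z0 hz0mem)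
  -- maximum of |Q| on the closed ball
  have hQcont : Continuous fun z : ℂ =>
      ‖((n1 : ℂ) * z ^ 4 + (n2 : ℂ) * z ^ 3 + (n3 : ℂ) * z ^ 2 + (n4 : ℂ) * z + (n5 : ℂ))‖ := by
    apply continuous_norm.comp
    fun_prop
  obtain ⟨w0, hw0mem, hw0max⟩ := (isCompact_closedBall ξst r).exists_isMaxOn
    ⟨ξst, Metric.mem_closedBall_self hr.le⟩ hQcont.continuousOn
  obtain ⟨MQ, hMQdef⟩ : ∃ MQ : ℝ, MQ = ‖((n1 : ℂ) * w0 ^ 4 + (n2 : ℂ) * w0 ^ 3 + (n3 : ℂ) * w0 ^ 2 + (n4 : ℂ) * w0 + (n5 : ℂ))‖ := ⟨_, rfl⟩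
  have hMQ0 : 0 ≤ MQ := hMQdef ▸ norm_nonneg _
  obtain ⟨Z, hZdef⟩ : ∃ Z : ℝ, Z = ‖ξst‖ + r := ⟨_, rfl⟩
  have hZ0 : 0 ≤ Z := hZdef ▸ add_nonneg (norm_nonneg _) hr.le
  obtain ⟨δ, hδdef⟩ : ∃ δ : ℝ, δ = min (τst/2) (min (1/(Z+1)) (m/(7*(Z+1)*(MQ+1)))) := ⟨_, rfl⟩
  have h7pos : (0:ℝ) < 7*(Z+1)*(MQ+1) :=
    mul_pos (mul_pos (by norm_num) (by linarith)) (by linarith)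
  have hδ0 : 0 < δ := by
    rw [hδdef]
    apply lt_min (by linarith)
    exact lt_min (one_div_pos.mpr (by linarith)) (div_pos hm h7pos)
  have hδτ : δ ≤ τst/2 := hδdef ▸ min_le_left _ _
  have hδZ : δ ≤ 1/(Z+1) := hδdef ▸ (min_le_right _ _).trans (min_le_left _ _)
  have hδm : δ ≤ m/(7*(Z+1)*(MQ+1)) := hδdef ▸ (min_le_right _ _).trans (min_le_right _ _)
  obtain ⟨τ, hτdef⟩ : ∃ τ : ℝ, τ = τst - δ := ⟨_, rfl⟩
  have hτ0' : 0 ≤ τ := by rw [hτdef]; linarith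
  have hτlt : τ < τst := by rw [hτdef]; linarith
  -- bound on |z| in the ball
  have hzZ : ∀ z ∈ Metric.closedBall ξst r, ‖z‖ ≤ Z := by
    intro z hz
    rw [Metric.mem_closedBall, Complex.dist_eq] at hz
    calc ‖z‖ = ‖(ξst + (z - ξst))‖ := by ring_nf
      _ ≤ ‖ξst‖ + ‖(z - ξst)‖ := norm_add_le _ _
      _ ≤ Z := by rw [hZdef]; linarith
  -- key uniform bound
  have hkey : ∀ z ∈ Metric.closedBall ξst r, ‖(ψ z τ - ψ z τst)‖ ≤ m/3 := by
    intro z hz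
    have hzre : 0 < z.re := lt_of_lt_of_le (by linarith) (hball_re z hz)
    have hdiffeq : ψ z τ - ψ z τst =
        (Complex.exp (-z * (τ:ℂ)) - Complex.exp (-z * (τst:ℂ))) *
          ((n1 : ℂ) * z ^ 4 + (n2 : ℂ) * z ^ 3 + (n3 : ℂ) * z ^ 2 + (n4 : ℂ) * z + (n5 : ℂ)) := by
      rw [hψ z τ, hψ z τst]; ring
    have hsplit : Complex.exp (-z * (τ:ℂ)) - Complex.exp (-z * (τst:ℂ)) =
        Complex.exp (-z * (τst:ℂ)) * (Complex.exp (z * (δ:ℂ)) - 1) := by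
      rw [mul_sub, mul_one, ← Complex.exp_add]
      congr 2
      rw [hτdef]
      push_cast
      ring
    have hexp1 : ‖(Complex.exp (-z * (τst:ℂ)))‖ ≤ 1 := by
      rw [Complex.norm_exp]
      have : (-z * (τst:ℂ)).re = -z.re * τst := by simp
      rw [this]
      exact Real.exp_le_one_iff.mpr (by nlinarith)
    have hzd1 : ‖(z * (δ:ℂ))‖ ≤ 1 := by
      rw [norm_mul, Complex.norm_real, Real.norm_eq_abs, abs_of_pos hδ0]
      have h1 : ‖z‖ * δ ≤ Z * δ := mul_le_mul_of_nonneg_right (hzZ z hz) hδ0.le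
      have h2 : Z * δ ≤ Z * (1/(Z+1)) := mul_le_mul_of_nonneg_left hδZ hZ0
      have h3 : Z * (1/(Z+1)) ≤ 1 := by
        rw [mul_one_div, div_le_one (by linarith)]
        linarith
      exact (h1.trans h2).trans h3
    have hexp2 : ‖(Complex.exp (z * (δ:ℂ)) - 1)‖ ≤ 2 * (Z * δ) := by
      have h1 := Complex.norm_exp_sub_one_le hzd1
      have h2 : ‖(z * (δ:ℂ))‖ ≤ Z * δ := by
        rw [norm_mul, Complex.norm_real, Real.norm_eq_abs, abs_of_pos hδ0]
        exact mul_le_mul_of_nonneg_right (hzZ z hz) hδ0.le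
      linarith
    have hQz : ‖((n1 : ℂ) * z ^ 4 + (n2 : ℂ) * z ^ 3 + (n3 : ℂ) * z ^ 2 + (n4 : ℂ) * z + (n5 : ℂ))‖ ≤ MQ := by
      rw [hMQdef]; exact hw0max hz
    have hQz0 : 0 ≤ ‖((n1 : ℂ) * z ^ 4 + (n2 : ℂ) * z ^ 3 + (n3 : ℂ) * z ^ 2 + (n4 : ℂ) * z + (n5 : ℂ))‖ :=
      norm_nonneg _
    rw [hdiffeq, hsplit]
    rw [norm_mul, norm_mul]
    have hbound1 : ‖(Complex.exp (-z * (τst:ℂ)))‖ * ‖(Complex.exp (z * (δ:ℂ)) - 1)‖ ≤ 2 * (Z * δ) := by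
      calc _ ≤ 1 * ‖(Complex.exp (z * (δ:ℂ)) - 1)‖ :=
            mul_le_mul_of_nonneg_right hexp1 (norm_nonneg _)
        _ = ‖(Complex.exp (z * (δ:ℂ)) - 1)‖ := one_mul _
        _ ≤ 2 * (Z * δ) := hexp2
    have hXδ : (Z+1)*(MQ+1)*δ ≤ m/7 := by
      rw [le_div_iff₀ h7pos] at hδm
      have heq7 : (Z+1)*(MQ+1)*δ = (δ*(7*(Z+1)*(MQ+1)))/7 := by ring
      rw [heq7]
      linarith [hδm]
    calc ‖(Complex.exp (-z * (τst:ℂ)))‖ * ‖(Complex.exp (z * (δ:ℂ)) - 1)‖ *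
          ‖((n1 : ℂ) * z ^ 4 + (n2 : ℂ) * z ^ 3 + (n3 : ℂ) * z ^ 2 + (n4 : ℂ) * z + (n5 : ℂ))‖
        ≤ 2 * (Z * δ) * MQ := by
          exact mul_le_mul hbound1 hQz hQz0
            (mul_nonneg (by norm_num) (mul_nonneg hZ0 hδ0.le))
      _ ≤ m/3 := by
          linarith [hXδ, hm, hδ0.le, mul_nonneg hZ0 hδ0.le, mul_nonneg hMQ0 hδ0.le,
            mul_nonneg (mul_nonneg hZ0 hδ0.le) hMQ0]
  -- the perturbed function has no zeros on the closed ball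
  have hgne : ∀ z ∈ Metric.closedBall ξst r, ψ z τ ≠ 0 := by
    intro z hz
    exact hbelow τ hτ0' hτlt z (le_of_lt (lt_of_lt_of_le (by linarith) (hball_re z hz)))
  -- lower bound on the sphere
  have hlow : ∀ z ∈ Metric.sphere ξst r, 2*m/3 ≤ ‖(ψ z τ)‖ := by
    intro z hz
    have hz' : z ∈ Metric.closedBall ξst r := Metric.sphere_subset_closedBall hz
    have h1 : m ≤ ‖(ψ z τst)‖ := by rw [hmdef]; exact hz0min hz
    have h2 : ‖(ψ z τst)‖ ≤ ‖(ψ z τ)‖ + ‖(ψ z τst - ψ z τ)‖ := by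
      calc ‖(ψ z τst)‖ = ‖(ψ z τ + (ψ z τst - ψ z τ))‖ := by ring_nf
        _ ≤ _ := norm_add_le _ _
    have h3 : ‖(ψ z τst - ψ z τ)‖ ≤ m/3 := by
      rw [← norm_neg, neg_sub]
      exact hkey z hz'
    linarith
  -- maximum modulus principle for the inverse
  have hgdiff : Differentiable ℂ (fun z : ℂ => ψ z τ) := hdiff τ
  have hdcl : DiffContOnCl ℂ (fun z : ℂ => (ψ z τ)⁻¹) (Metric.ball ξst r) := by
    constructor
    · exact (hgdiff.differentiableOn).inv
        (fun z hz => hgne z (Metric.ball_subset_closedBall hz))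
    · rw [closure_ball ξst hr.ne']
      exact (hgdiff.continuous.continuousOn).inv₀ hgne
  have hfrontier : ∀ z ∈ frontier (Metric.ball ξst r), ‖(ψ z τ)⁻¹‖ ≤ (2*m/3)⁻¹ := by
    intro z hz
    rw [frontier_ball ξst hr.ne'] at hz
    rw [norm_inv]
    exact inv_anti₀ (by linarith) (hlow z hz)
  have hξcl : ξst ∈ closure (Metric.ball ξst r) := by
    rw [closure_ball ξst hr.ne']
    exact Metric.mem_closedBall_self hr.le
  have hmax := Complex.norm_le_of_forall_mem_frontier_norm_le
    Metric.isBounded_ball hdcl hfrontier hξcl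
  rw [norm_inv] at hmax
  have hgst0 : ψ ξst τ ≠ 0 := hgne ξst (Metric.mem_closedBall_self hr.le)
  have hgstpos : 0 < ‖(ψ ξst τ)‖ := norm_pos_iff.mpr hgst0
  have hge : 2*m/3 ≤ ‖(ψ ξst τ)‖ := by
    rw [inv_le_inv₀ hgstpos (by linarith)] at hmax
    exact hmax
  have hle : ‖(ψ ξst τ)‖ ≤ m/3 := by
    have := hkey ξst (Metric.mem_closedBall_self hr.le)
    rw [hrootst, sub_zero] at this
    exact this
  linarith
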